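/- Let A be a commutative ring and let f : X̃ → Spec A be a morphism of schemes. Then f is surjective on semi-local schemes if and only if for every finite set P of prime ideals of A there exists a morphism of schemes Spec(A_{S_P}) → X̃ whose composite with f equals the canonical morphism Spec(A_{S_P}) → Spec A, where S_P := A \ ⋃_{p ∈ P} p and A_{S_P} denotes the localization of A at the multiplicative set S_P. (The paper's characterization lemma for the class SSL, for an affine target; Spec(A_{S_P}) is the semi-local scheme of Spec A at the finite set of points P.) -/

import Mathlib

open CategoryTheory AlgebraicGeometry

/-- A scheme is *semi-local* if it is isomorphic to the spectrum of a commutative ring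
having only finitely many maximal ideals. -/
def IsSemiLocalScheme (S : Scheme.{u}) : Prop :=
  ∃ R : CommRingCat.{u}, {I : Ideal R | I.IsMaximal}.Finite ∧ Nonempty (S ≅ Spec R)

/-- A morphism of schemes `f : X' ⟶ X` is *surjective on semi-local schemes* (belongs to the
class `SSL`) if for every semi-local scheme `S` the induced map
`Hom(S, X') → Hom(S, X)` is surjective. -/
def SurjOnSemiLocal {X' X : Scheme.{u}} (f : X' ⟶ X) : Prop :=
  ∀ S : Scheme.{u}, IsSemiLocalScheme S → ∀ g : S ⟶ X, ∃ h : S ⟶ X', h ≫ f = g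

/-- For a set `P` of prime ideals of `A`, the multiplicative set
`S_P = A \ ⋃_{p ∈ P} p`, i.e. the intersection of the complements of the primes in `P`. -/
def primeSetCompl {A : Type u} [CommRing A] (P : Set (Ideal A))
    (hP : ∀ p ∈ P, p.IsPrime) : Submonoid A :=
  ⨅ p : P, @Ideal.primeCompl A _ p.1 (hP p.1 p.2)

lemma mem_primeSetCompl {A : Type u} [CommRing A] {P : Set (Ideal A)}
    (hP : ∀ p ∈ P, p.IsPrime) (a : A) :
    a ∈ primeSetCompl P hP ↔ ∀ p ∈ P, a ∉ p := by
  simp [primeSetCompl, Submonoid.mem_iInf, Ideal.primeCompl]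

lemma semilocal_aux {A : Type u} [CommRing A] (P : Set (Ideal A)) (hPfin : P.Finite)
    (hP : ∀ p ∈ P, p.IsPrime) :
    {I : Ideal (Localization (primeSetCompl P hP)) | I.IsMaximal}.Finite := by
  classical
  set M := primeSetCompl P hP
  set L := Localization M
  have hinj : Set.InjOn (Ideal.comap (algebraMap A L))
      {I : Ideal L | I.IsMaximal} := by
    intro I hI J hJ h
    rw [← IsLocalization.map_comap M L I, ← IsLocalization.map_comap M L J]
    exact congrArg (Ideal.map (algebraMap A L)) h
  refine Set.Finite.of_finite_image ?_ hinj
  refine hPfin.subset ?_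
  rintro q ⟨I, hI, rfl⟩
  have hIp : I.IsPrime := hI.isPrime
  obtain ⟨hqp, hdisj⟩ := (IsLocalization.isPrime_iff_isPrime_disjoint M L I).mp hIp
  set q := Ideal.comap (algebraMap A L) I
  have hsub : (q : Set A) ⊆ ⋃ p ∈ (hPfin.toFinset : Set (Ideal A)), (p : Set A) := by
    intro x hx
    have hxM : x ∉ M := fun hxM => Set.disjoint_left.mp hdisj hxM hx
    rw [mem_primeSetCompl hP] at hxM
    push_neg at hxM
    obtain ⟨p, hp, hxp⟩ := hxM
    exact Set.mem_biUnion (by simpa using hp) hxp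
  have := (Ideal.subset_union_prime (⊥ : Ideal A) ⊥
    (fun p hp _ _ => hP p (by simpa using hp))).mp hsub
  obtain ⟨p, hpP, hqlep⟩ := this
  rw [Set.Finite.mem_toFinset] at hpP
  have hpdisj : Disjoint (M : Set A) (p : Set A) := by
    rw [Set.disjoint_left]
    intro x hxM hxp
    exact ((mem_primeSetCompl hP x).mp hxM) p hpP hxp
  have hpe : (Ideal.map (algebraMap A L) p).IsPrime :=
    IsLocalization.isPrime_of_isPrime_disjoint M L p (hP p hpP) hpdisj
  have hle : I ≤ Ideal.map (algebraMap A L) p := by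
    conv_lhs => rw [← IsLocalization.map_comap M L I]
    exact Ideal.map_mono hqlep
  have hEq : I = Ideal.map (algebraMap A L) p :=
    ((hI.eq_of_le hpe.ne_top hle))
  have : q = p := by
    rw [show q = Ideal.comap (algebraMap A L) I from rfl, hEq]
    exact IsLocalization.comap_map_of_isPrime_disjoint M L (I := p) (hP p hpP) hpdisj
  rwa [this]

/-- Characterization of the class `SSL` for an affine target: a morphism of schemes
`f : X̃ ⟶ Spec A` is surjective on semi-local schemes if and only if for every finite set `P`
of prime ideals of `A` the canonical morphism `Spec A_{S_P} ⟶ Spec A` (the semi-local scheme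
of `Spec A` at `P`) lifts along `f`. -/
theorem surjOnSemiLocal_iff_forall_finset_primes {A : Type u} [CommRing A]
    (Xtil : Scheme.{u}) (f : Xtil ⟶ Spec (CommRingCat.of A)) :
    SurjOnSemiLocal f ↔
      ∀ (P : Set (Ideal A)) (_ : P.Finite) (hP : ∀ p ∈ P, p.IsPrime),
        ∃ h : Spec (CommRingCat.of (Localization (primeSetCompl P hP))) ⟶ Xtil,
          h ≫ f =
            Spec.map (CommRingCat.ofHom
              (algebraMap A (Localization (primeSetCompl P hP)))) := by
  constructor
  · intro hf P hPfin hP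
    exact hf _ ⟨CommRingCat.of (Localization (primeSetCompl P hP)),
      semilocal_aux P hPfin hP, ⟨Iso.refl _⟩⟩ _
  · intro H S hS g
    obtain ⟨R, hRfin, ⟨e⟩⟩ := hS
    set φ : CommRingCat.of A ⟶ R := Spec.preimage (e.inv ≫ g)
    set P : Set (Ideal A) := (fun I => Ideal.comap φ.hom I) '' {I : Ideal R | I.IsMaximal}
    have hPfin : P.Finite := hRfin.image _
    have hP : ∀ p ∈ P, p.IsPrime := by
      rintro p ⟨I, hI, rfl⟩
      exact hI.isPrime.comap φ.hom
    obtain ⟨h, hh⟩ := H P hPfin hP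
    have hunits : ∀ a : primeSetCompl P hP, IsUnit (φ.hom a) := by
      rintro ⟨a, ha⟩
      rw [mem_primeSetCompl] at ha
      by_contra hu
      obtain ⟨I, hI, hmem⟩ := exists_max_ideal_of_mem_nonunits hu
      exact ha _ ⟨I, hI, rfl⟩ hmem
    set ψ : Localization (primeSetCompl P hP) →+* R :=
      IsLocalization.lift (S := Localization (primeSetCompl P hP)) hunits
    refine ⟨e.hom ≫ Spec.map (CommRingCat.ofHom ψ) ≫ h, ?_⟩
    have key : (CommRingCat.ofHom (algebraMap A (Localization (primeSetCompl P hP))) ≫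
        CommRingCat.ofHom ψ : CommRingCat.of A ⟶ R) = φ := by
      ext a
      exact IsLocalization.lift_eq hunits a
    have : Spec.map (CommRingCat.ofHom ψ) ≫
        Spec.map (CommRingCat.ofHom (algebraMap A (Localization (primeSetCompl P hP)))) =
        Spec.map φ := by
      rw [← Spec.map_comp, key]
    rw [Category.assoc, Category.assoc, hh, this, Spec.map_preimage,
      Iso.hom_inv_id_assoc]
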